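/- Let p, q be positive integers, and let X_1,...,X_p, Y_1,...,Y_q be jointly Gaussian centered random variables forming elements x_i, y_j of the first Wiener chaos. Let f = x_1 ⊙ ... ⊙ x_p and g = y_1 ⊙ ... ⊙ y_q be symmetric tensor products in H^{⊙p}, H^{⊙q}, where H is the underlying Hilbert space. Then for the symmetrized r-th contraction, r! · C(p,r) · C(q,r) · (f ⊗̃_r g) = ∑_{I ⊆ {1,...,p}, |I|=r} ∑_{J ⊆ {1,...,q}, |J|=r} ∑_{σ ∈ S_r} ∏_{k=1}^r ⟨x_{i_k}, y_{j_{σ(k)}}⟩_H · ( ⊙_{i ∉ I} x_i ⊙ ⊙_{j ∉ J} y_j ), where I = {i_1 < ... < i_r}, J = {j_1 < ... < j_r}. -/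

import Mathlib

open scoped TensorProduct InnerProductSpace
open PiTensorProduct

/-- The symmetric tensor `⊙ᵢ vᵢ`, realized inside the `n`-fold tensor power as
the symmetrization `(1/n!) ∑_{σ ∈ S_n} v_{σ(1)} ⊗ ⋯ ⊗ v_{σ(n)}`. -/
noncomputable def symTensor {H : Type*} [NormedAddCommGroup H]
    [InnerProductSpace ℝ H] {n : ℕ} (v : Fin n → H) :
    ⨂[ℝ] _ : Fin n, H :=
  ((n.factorial : ℝ)⁻¹) •
    ∑ σ : Equiv.Perm (Fin n), tprod ℝ (fun i => v (σ i))

section Aux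

open Finset

variable {H : Type*} [NormedAddCommGroup H] [InnerProductSpace ℝ H]

lemma symTensor_comp_perm {n : ℕ} (v : Fin n → H) (e : Equiv.Perm (Fin n)) :
    symTensor (v ∘ e) = symTensor v := by
  unfold symTensor
  congr 1
  exact Fintype.sum_equiv (Equiv.mulLeft e) _ _ (fun σ => by
    simp [Equiv.Perm.mul_apply, Function.comp])

lemma symTensor_append_comp {m n : ℕ} (u : Fin m → H) (v : Fin n → H)
    (ω : Equiv.Perm (Fin m)) (ω' : Equiv.Perm (Fin n)) :
    symTensor (Fin.append (u ∘ ω) (v ∘ ω')) = symTensor (Fin.append u v) := by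
  have h : Fin.append (u ∘ ω) (v ∘ ω') = (Fin.append u v) ∘
      (finSumFinEquiv.symm.trans ((ω.sumCongr ω').trans finSumFinEquiv)) := by
    funext i
    refine Fin.addCases (fun i => ?_) (fun i => ?_) i
    · simp [Fin.append_left]
    · simp [Fin.append_right]
  rw [h, symTensor_comp_perm]

variable {p r : ℕ}

def splitFun (hrp : r ≤ p) (I : Finset (Fin p)) (hI : I.card = r)
    (ρ : Equiv.Perm (Fin r)) (ω : Equiv.Perm (Fin (p - r))) : Fin p → Fin p :=
  fun k => if hk : (k : ℕ) < r then I.orderEmbOfFin hI (ρ ⟨k, hk⟩)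
    else (Iᶜ).orderEmbOfFin (by simp [Finset.card_compl, hI])
      (ω ⟨(k : ℕ) - r, by have := k.2; omega⟩)

lemma splitFun_lt (hrp : r ≤ p) (I : Finset (Fin p)) (hI : I.card = r)
    (ρ : Equiv.Perm (Fin r)) (ω : Equiv.Perm (Fin (p - r)))
    (k : Fin p) (hk : (k : ℕ) < r) :
    splitFun hrp I hI ρ ω k = I.orderEmbOfFin hI (ρ ⟨k, hk⟩) := dif_pos hk

lemma splitFun_ge (hrp : r ≤ p) (I : Finset (Fin p)) (hI : I.card = r)
    (ρ : Equiv.Perm (Fin r)) (ω : Equiv.Perm (Fin (p - r)))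
    (i : Fin (p - r)) :
    splitFun hrp I hI ρ ω ⟨r + i.1, by have := i.2; omega⟩ =
      (Iᶜ).orderEmbOfFin (by simp [Finset.card_compl, hI]) (ω i) := by
  have h : ¬ ((⟨r + i.1, by have := i.2; omega⟩ : Fin p) : ℕ) < r := by simp
  rw [splitFun, dif_neg h]
  congr 1
  exact Fin.ext (by simp)

lemma splitFun_injective (hrp : r ≤ p) (I : Finset (Fin p)) (hI : I.card = r)
    (ρ : Equiv.Perm (Fin r)) (ω : Equiv.Perm (Fin (p - r))) :
    Function.Injective (splitFun hrp I hI ρ ω) := by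
  intro a b hab
  unfold splitFun at hab
  by_cases ha : (a : ℕ) < r <;> by_cases hb : (b : ℕ) < r
  · rw [dif_pos ha, dif_pos hb] at hab
    have h1 := (I.orderEmbOfFin hI).injective hab
    have h2 := ρ.injective h1
    exact Fin.ext (by simpa using h2)
  · rw [dif_pos ha, dif_neg hb] at hab
    exfalso
    have h1 : I.orderEmbOfFin hI (ρ ⟨a, ha⟩) ∈ I := Finset.orderEmbOfFin_mem _ _ _
    have h2 : (Iᶜ).orderEmbOfFin (by simp [Finset.card_compl, hI] : (Iᶜ).card = p - r)
        (ω ⟨(b : ℕ) - r, by have := b.2; omega⟩) ∈ Iᶜ := Finset.orderEmbOfFin_mem _ _ _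
    rw [hab] at h1
    exact (Finset.mem_compl.mp h2) h1
  · rw [dif_neg ha, dif_pos hb] at hab
    exfalso
    have h1 : I.orderEmbOfFin hI (ρ ⟨b, hb⟩) ∈ I := Finset.orderEmbOfFin_mem _ _ _
    have h2 : (Iᶜ).orderEmbOfFin (by simp [Finset.card_compl, hI] : (Iᶜ).card = p - r)
        (ω ⟨(a : ℕ) - r, by have := a.2; omega⟩) ∈ Iᶜ := Finset.orderEmbOfFin_mem _ _ _
    rw [← hab] at h1
    exact (Finset.mem_compl.mp h2) h1
  · rw [dif_neg ha, dif_neg hb] at hab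
    have h1 := ((Iᶜ).orderEmbOfFin (by simp [Finset.card_compl, hI] :
      (Iᶜ).card = p - r)).injective hab
    have h2 := ω.injective h1
    have h3 := congrArg Fin.val h2
    simp only at h3
    exact Fin.ext (by omega)

noncomputable def splitPerm (hrp : r ≤ p) (I : Finset (Fin p)) (hI : I.card = r)
    (ρ : Equiv.Perm (Fin r)) (ω : Equiv.Perm (Fin (p - r))) : Equiv.Perm (Fin p) :=
  Equiv.ofBijective _ (Finite.injective_iff_bijective.mp (splitFun_injective hrp I hI ρ ω))

lemma splitPerm_apply (hrp : r ≤ p) (I : Finset (Fin p)) (hI : I.card = r)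
    (ρ : Equiv.Perm (Fin r)) (ω : Equiv.Perm (Fin (p - r))) (k : Fin p) :
    splitPerm hrp I hI ρ ω k = splitFun hrp I hI ρ ω k := rfl

lemma mem_iff_splitFun (hrp : r ≤ p) (I : Finset (Fin p)) (hI : I.card = r)
    (ρ : Equiv.Perm (Fin r)) (ω : Equiv.Perm (Fin (p - r))) (a : Fin p) :
    a ∈ I ↔ ∃ k : Fin r, splitFun hrp I hI ρ ω ⟨k.1, lt_of_lt_of_le k.2 hrp⟩ = a := by
  constructor
  · intro ha
    have : a ∈ Set.range (I.orderEmbOfFin hI) := by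
      rw [Finset.range_orderEmbOfFin]; exact ha
    obtain ⟨j, hj⟩ := this
    refine ⟨ρ.symm j, ?_⟩
    rw [splitFun_lt hrp I hI ρ ω _ (ρ.symm j).2]
    have : (⟨((ρ.symm j : Fin r) : ℕ), (ρ.symm j).2⟩ : Fin r) = ρ.symm j := Fin.eta _ _
    rw [this, Equiv.apply_symm_apply]
    exact hj
  · rintro ⟨k, hk⟩
    rw [splitFun_lt hrp I hI ρ ω _ k.2] at hk
    rw [← hk]
    exact Finset.orderEmbOfFin_mem _ _ _

abbrev SplitIdx (p r : ℕ) :=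
  {s : Finset (Fin p) // s ∈ Finset.powersetCard r (univ : Finset (Fin p))} ×
    Equiv.Perm (Fin r) × Equiv.Perm (Fin (p - r))

noncomputable def splitMap (hrp : r ≤ p) : SplitIdx p r → Equiv.Perm (Fin p) :=
  fun a => splitPerm hrp a.1.1 ((Finset.mem_powersetCard.mp a.1.2).2) a.2.1 a.2.2

lemma splitMap_injective (hrp : r ≤ p) :
    Function.Injective (splitMap (p := p) (r := r) hrp) := by
  rintro ⟨⟨I, hIm⟩, ρ, ω⟩ ⟨⟨I', hIm'⟩, ρ', ω'⟩ h
  have hI : I.card = r := (Finset.mem_powersetCard.mp hIm).2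
  have hI' : I'.card = r := (Finset.mem_powersetCard.mp hIm').2
  have hf : ∀ k, splitFun hrp I hI ρ ω k = splitFun hrp I' hI' ρ' ω' k := by
    intro k
    have := DFunLike.congr_fun h k
    simpa [splitMap, splitPerm_apply] using this
  have hII : I = I' := by
    ext a
    rw [mem_iff_splitFun hrp I hI ρ ω a, mem_iff_splitFun hrp I' hI' ρ' ω' a]
    exact exists_congr fun k => by rw [hf]
  subst hII
  have hρ : ρ = ρ' := by
    refine Equiv.ext fun k => ?_
    have h1 := hf ⟨k.1, lt_of_lt_of_le k.2 hrp⟩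
    rw [splitFun_lt hrp I hI ρ ω _ k.2, splitFun_lt hrp I hI' ρ' ω' _ k.2] at h1
    have h2 := (I.orderEmbOfFin hI).injective h1
    simpa [Fin.eta] using h2
  have hω : ω = ω' := by
    refine Equiv.ext fun i => ?_
    have h1 := hf ⟨r + i.1, by have := i.2; omega⟩
    rw [splitFun_ge hrp I hI ρ ω i, splitFun_ge hrp I hI' ρ' ω' i] at h1
    exact ((Iᶜ).orderEmbOfFin (by simp [Finset.card_compl, hI] :
      (Iᶜ).card = p - r)).injective h1
  simp [hρ, hω]

lemma splitMap_bijective (hrp : r ≤ p) :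
    Function.Bijective (splitMap (p := p) (r := r) hrp) := by
  rw [Fintype.bijective_iff_injective_and_card]
  refine ⟨splitMap_injective hrp, ?_⟩
  simp only [Fintype.card_prod, Fintype.card_coe, Finset.card_powersetCard, card_univ,
    Fintype.card_fin, Fintype.card_perm]
  rw [← Nat.choose_mul_factorial_mul_factorial hrp]
  ring

lemma sum_perm_split {M : Type*} [AddCommMonoid M] (hrp : r ≤ p)
    (f : Equiv.Perm (Fin p) → M) :
    ∑ σ : Equiv.Perm (Fin p), f σ =
    ∑ I ∈ (Finset.powersetCard r (univ : Finset (Fin p))).attach,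
      ∑ ρ : Equiv.Perm (Fin r), ∑ ω : Equiv.Perm (Fin (p - r)),
        f (splitPerm hrp I.1 ((Finset.mem_powersetCard.mp I.2).2) ρ ω) := by
  rw [← Fintype.sum_bijective (splitMap hrp) (splitMap_bijective hrp) _ f (fun a => rfl)]
  rw [Fintype.sum_prod_type]
  rw [Finset.univ_eq_attach]
  exact Finset.sum_congr rfl fun I _ => Fintype.sum_prod_type _

lemma inner_sum_reindex {M : Type*} [AddCommGroup M] [Module ℝ M] {r : ℕ}
    (c : Fin r → Fin r → ℝ) (T : M) :
    ∑ ρ : Equiv.Perm (Fin r), ∑ π : Equiv.Perm (Fin r),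
      (∏ k : Fin r, c (ρ k) (π k)) • T
    = r.factorial • ∑ π : Equiv.Perm (Fin r), (∏ k : Fin r, c k (π k)) • T := by
  have h : ∀ ρ : Equiv.Perm (Fin r),
      ∑ π : Equiv.Perm (Fin r), (∏ k : Fin r, c (ρ k) (π k)) • T
      = ∑ π : Equiv.Perm (Fin r), (∏ k : Fin r, c k (π k)) • T := by
    intro ρ
    refine Fintype.sum_equiv (Equiv.mulRight ρ⁻¹) _ _ fun π => ?_
    congr 1
    simp only [Equiv.coe_mulRight]
    rw [← Equiv.prod_comp ρ (fun k => c k ((π * ρ⁻¹) k))]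
    exact Finset.prod_congr rfl fun k _ => by simp
  simp only [h]
  rw [Finset.sum_const, Finset.card_univ, Fintype.card_perm, Fintype.card_fin]

end Aux

section Eval

open Finset

variable {H : Type*} [NormedAddCommGroup H] [InnerProductSpace ℝ H]
variable {p q r : ℕ}

lemma eval_term (hrp : r ≤ p) (hrq : r ≤ q) (x : Fin p → H) (y : Fin q → H)
    (I : Finset (Fin p)) (hI : I.card = r) (J : Finset (Fin q)) (hJ : J.card = r)
    (ρ : Equiv.Perm (Fin r)) (ω : Equiv.Perm (Fin (p - r)))
    (π : Equiv.Perm (Fin r)) (ω' : Equiv.Perm (Fin (q - r))) :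
    (∏ k : Fin r,
        ⟪x ((splitPerm hrp I hI ρ ω) ⟨k.1, lt_of_lt_of_le k.2 hrp⟩),
          y ((splitPerm hrq J hJ π ω') ⟨k.1, lt_of_lt_of_le k.2 hrq⟩)⟫_ℝ) •
      symTensor (Fin.append
        (fun i : Fin (p - r) => x ((splitPerm hrp I hI ρ ω) ⟨r + i.1, by have := i.2; omega⟩))
        (fun i : Fin (q - r) => y ((splitPerm hrq J hJ π ω') ⟨r + i.1, by have := i.2; omega⟩)))
    = (∏ k : Fin r,
        ⟪x (I.orderEmbOfFin hI (ρ k)), y (J.orderEmbOfFin hJ (π k))⟫_ℝ) •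
      symTensor (Fin.append
        (fun i : Fin (p - r) => x ((Iᶜ).orderEmbOfFin
          (by simp [Finset.card_compl, hI]) i))
        (fun i : Fin (q - r) => y ((Jᶜ).orderEmbOfFin
          (by simp [Finset.card_compl, hJ]) i))) := by
  have hprod : ∀ k : Fin r,
      ⟪x ((splitPerm hrp I hI ρ ω) ⟨k.1, lt_of_lt_of_le k.2 hrp⟩),
        y ((splitPerm hrq J hJ π ω') ⟨k.1, lt_of_lt_of_le k.2 hrq⟩)⟫_ℝ
      = ⟪x (I.orderEmbOfFin hI (ρ k)), y (J.orderEmbOfFin hJ (π k))⟫_ℝ := by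
    intro k
    rw [splitPerm_apply, splitFun_lt hrp I hI ρ ω _ k.2,
      splitPerm_apply, splitFun_lt hrq J hJ π ω' _ k.2]
  have happ1 : (fun i : Fin (p - r) => x ((splitPerm hrp I hI ρ ω) ⟨r + i.1, by have := i.2; omega⟩))
      = (x ∘ (Iᶜ).orderEmbOfFin (by simp [Finset.card_compl, hI] : (Iᶜ).card = p - r)) ∘ ω := by
    funext i
    exact congrArg x (splitFun_ge hrp I hI ρ ω i)
  have happ2 : (fun i : Fin (q - r) => y ((splitPerm hrq J hJ π ω') ⟨r + i.1, by have := i.2; omega⟩))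
      = (y ∘ (Jᶜ).orderEmbOfFin (by simp [Finset.card_compl, hJ] : (Jᶜ).card = q - r)) ∘ ω' := by
    funext i
    exact congrArg y (splitFun_ge hrq J hJ π ω' i)
  rw [happ1, happ2, symTensor_append_comp]
  congr 1
  exact Finset.prod_congr rfl fun k _ => hprod k

end Eval

section Main

open Finset

lemma final_collect {M : Type*} [AddCommGroup M] [Module ℝ M] {r : ℕ}
    (c : Fin r → Fin r → ℝ) (T : M) (A B a b : ℝ)
    (hs : (r.factorial : ℝ) * (A * B * a * b) = 1) :
    ∑ ρ : Equiv.Perm (Fin r), ∑ π : Equiv.Perm (Fin r),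
      A • (B • (a • (b • ((∏ k : Fin r, c (ρ k) (π k)) • T))))
    = ∑ π : Equiv.Perm (Fin r), (∏ k : Fin r, c k (π k)) • T := by
  have h1 : ∀ ρ π : Equiv.Perm (Fin r),
      A • (B • (a • (b • ((∏ k : Fin r, c (ρ k) (π k)) • T))))
      = (∏ k : Fin r, c (ρ k) (π k)) • ((A * B * a * b) • T) := by
    intro ρ π
    rw [smul_smul, smul_smul, smul_smul, smul_smul, smul_smul]
    congr 1
    ring
  simp only [h1]
  rw [inner_sum_reindex c ((A * B * a * b) • T), ← Nat.cast_smul_eq_nsmul ℝ,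
    Finset.smul_sum]
  refine Finset.sum_congr rfl fun π _ => ?_
  rw [smul_comm, smul_smul, smul_smul, mul_assoc, hs, mul_one]

set_option maxHeartbeats 2000000 in
theorem symmetrized_contraction_formula {H : Type*} [NormedAddCommGroup H]
    [InnerProductSpace ℝ H] (p q r : ℕ) (hrp : r ≤ p) (hrq : r ≤ q)
    (x : Fin p → H) (y : Fin q → H) :
    ((r.factorial * p.choose r * q.choose r : ℕ) : ℝ) •
      (((p.factorial * q.factorial : ℕ) : ℝ)⁻¹ •
        ∑ σ : Equiv.Perm (Fin p), ∑ τ : Equiv.Perm (Fin q),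
          (∏ k : Fin r,
            ⟪x (σ ⟨k.1, lt_of_lt_of_le k.2 hrp⟩),
              y (τ ⟨k.1, lt_of_lt_of_le k.2 hrq⟩)⟫_ℝ) •
          symTensor (Fin.append
            (fun i : Fin (p - r) => x (σ ⟨r + i.1, by have := i.2; omega⟩))
            (fun i : Fin (q - r) => y (τ ⟨r + i.1, by have := i.2; omega⟩))))
    =
    ∑ I ∈ (Finset.powersetCard r (Finset.univ : Finset (Fin p))).attach,
      ∑ J ∈ (Finset.powersetCard r (Finset.univ : Finset (Fin q))).attach,
        ∑ σ : Equiv.Perm (Fin r),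
          (∏ k : Fin r,
            ⟪x (I.1.orderEmbOfFin ((Finset.mem_powersetCard.mp I.2).2) k),
              y (J.1.orderEmbOfFin ((Finset.mem_powersetCard.mp J.2).2) (σ k))⟫_ℝ) •
          symTensor (Fin.append
            (fun i : Fin (p - r) => x ((I.1ᶜ).orderEmbOfFin
              (by simp [Finset.card_compl, (Finset.mem_powersetCard.mp I.2).2]) i))
            (fun i : Fin (q - r) => y ((J.1ᶜ).orderEmbOfFin
              (by simp [Finset.card_compl, (Finset.mem_powersetCard.mp J.2).2]) i))) := by
  rw [sum_perm_split hrp]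
  simp only [sum_perm_split hrq]
  simp only [eval_term hrp hrq x y]
  simp only [Finset.sum_const, Finset.card_univ, Fintype.card_perm, Fintype.card_fin]
  simp only [← Nat.cast_smul_eq_nsmul ℝ]
  simp only [Finset.smul_sum]
  refine Finset.sum_congr rfl fun I _ => ?_
  rw [Finset.sum_comm]
  refine Finset.sum_congr rfl fun J _ => ?_
  have hI : (I.1).card = r := (Finset.mem_powersetCard.mp I.2).2
  have hJc : (J.1).card = r := (Finset.mem_powersetCard.mp J.2).2
  refine final_collect
    (fun a b => ⟪x ((I.1).orderEmbOfFin hI a), y ((J.1).orderEmbOfFin hJc b)⟫_ℝ)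
    (symTensor (Fin.append
      (fun i : Fin (p - r) => x ((I.1ᶜ).orderEmbOfFin (by simp [Finset.card_compl, hI]) i))
      (fun i : Fin (q - r) => y ((J.1ᶜ).orderEmbOfFin (by simp [Finset.card_compl, hJc]) i))))
    ((r.factorial * p.choose r * q.choose r : ℕ) : ℝ)
    (((p.factorial * q.factorial : ℕ) : ℝ))⁻¹
    (((p - r).factorial : ℕ) : ℝ) (((q - r).factorial : ℕ) : ℝ) ?_
  have hnat : r.factorial * (r.factorial * p.choose r * q.choose r) *
      ((p - r).factorial * (q - r).factorial) = p.factorial * q.factorial := by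
    rw [← Nat.choose_mul_factorial_mul_factorial hrp,
      ← Nat.choose_mul_factorial_mul_factorial hrq]
    ring
  have hD : ((p.factorial * q.factorial : ℕ) : ℝ) ≠ 0 := by positivity
  field_simp
  have hcast := congrArg (Nat.cast (R := ℝ)) hnat
  push_cast at hcast
  push_cast
  linear_combination hcast
end Main
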